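/- arXiv:2302.13023 — 5 statements merged into one kernel-verified Lean document; each statement's English description precedes it below -/
import Mathlib

section
/- Let Q be an A-valued quadratic form on Λ satisfying strict invariance b(α,λ) = ⟨α̌,λ⟩·Q(α) for all coroots α. Then Q vanishes on the subgroup Λ^{♯,r} generated by the elements n_α·α (where n_α = ord Q(α)), and therefore the restriction of Q to Λ^♯ descends to a well-defined group homomorphism Λ^♯/Λ^{♯,r} → A. -/
/-- Under strict invariance `b(α,λ) = ⟨α̌,λ⟩ • Q(α)`, the quadratic form `Q`
vanishes on the subgroup `Λ^{♯,r}` generated by the elements `n_α • α` (with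
`n_α = ord(Q α)`), and therefore the restriction of `Q` to `Λ^♯` descends to a well-defined
group homomorphism `Λ^♯/Λ^{♯,r} → A` (well-definedness and additivity are stated
explicitly). -/
theorem stmt2 {Λ A : Type*} [AddCommGroup Λ] [AddCommGroup A] [Finite A]
    [Module.Free ℤ Λ] [Module.Finite ℤ Λ]
    (Q : Λ → A)
    (hQ : ∀ (n : ℤ) (l : Λ), Q (n • l) = n ^ 2 • Q l)
    (b : Λ → Λ → A)
    (hb : ∀ l m : Λ, b l m = Q (l + m) - Q l - Q m)
    (hbadd : ∀ l₁ l₂ m : Λ, b (l₁ + l₂) m = b l₁ m + b l₂ m)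
    (hbadd' : ∀ l m₁ m₂ : Λ, b l (m₁ + m₂) = b l m₁ + b l m₂)
    (Φ : Set Λ) (d : Λ → Λ →+ ℤ)
    (hpair : ∀ α ∈ Φ, d α α = 2)
    (hstrict : ∀ α ∈ Φ, ∀ l : Λ, b α l = d α l • Q α) :
    (∀ x ∈ AddSubgroup.closure {x : Λ | ∃ α ∈ Φ, x = (addOrderOf (Q α) : ℤ) • α},
       Q x = 0) ∧
    (∀ l m : Λ, (∀ μ : Λ, b l μ = 0) → (∀ μ : Λ, b m μ = 0) →
       l - m ∈ AddSubgroup.closure {x : Λ | ∃ α ∈ Φ, x = (addOrderOf (Q α) : ℤ) • α} →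
       Q l = Q m) ∧
    (∀ l m : Λ, (∀ μ : Λ, b l μ = 0) → (∀ μ : Λ, b m μ = 0) →
       Q (l + m) = Q l + Q m) := by
  have hQ0 : Q 0 = 0 := by simpa using hQ 0 0
  have hb0 : ∀ μ, b 0 μ = 0 := by
    intro μ
    have h := hbadd 0 0 μ
    rw [add_zero] at h
    exact (left_eq_add.mp h)
  have key : ∀ x ∈ AddSubgroup.closure
      {x : Λ | ∃ α ∈ Φ, x = (addOrderOf (Q α) : ℤ) • α},
      Q x = 0 ∧ ∀ μ, b x μ = 0 := by
    intro x hx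
    induction hx using AddSubgroup.closure_induction with
    | mem x hx =>
      obtain ⟨α, hα, rfl⟩ := hx
      have hord : (addOrderOf (Q α) : ℤ) • Q α = 0 := by
        rw [natCast_zsmul]
        exact addOrderOf_nsmul_eq_zero (Q α)
      constructor
      · rw [hQ, sq, mul_smul, hord, smul_zero]
      · intro μ
        have g : Λ →+ A := AddMonoidHom.mk' (fun y => b y μ) (fun a c => hbadd a c μ)
        have : b ((addOrderOf (Q α) : ℤ) • α) μ =
            (addOrderOf (Q α) : ℤ) • b α μ := by
          exact (AddMonoidHom.mk' (fun y => b y μ) (fun a c => hbadd a c μ)).map_zsmul _ α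
        rw [this, hstrict α hα μ, smul_comm, hord, smul_zero]
    | zero => exact ⟨hQ0, hb0⟩
    | add x y hx hy ihx ihy =>
      obtain ⟨hQx, hbx⟩ := ihx
      obtain ⟨hQy, hby⟩ := ihy
      constructor
      · have h := hb x y
        rw [hbx y, hQx, hQy, sub_zero, sub_zero] at h
        exact h.symm
      · intro μ
        rw [hbadd, hbx, hby, add_zero]
    | neg x hx ih =>
      obtain ⟨hQx, hbx⟩ := ih
      constructor
      · have h := hQ (-1) x
        rw [neg_one_zsmul] at h
        simpa [hQx] using h
      · intro μ
        have h := hbadd x (-x) μ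
        rw [add_neg_cancel, hb0, hbx] at h
        simpa using h.symm
  refine ⟨fun x hx => (key x hx).1, ?_, ?_⟩
  · intro l m hl hm hmem
    obtain ⟨hQd, hbd⟩ := key _ hmem
    have h := hb (l - m) m
    rw [hbd m, hQd, sub_add_cancel, sub_zero] at h
    have := sub_eq_zero.mp h.symm
    exact this
  · intro l m hl hm
    have h := hb l m
    rw [hl m] at h
    have := sub_eq_zero.mp (by rw [sub_sub] at h; exact h.symm)
    exact this
end

section
/- Under the strict invariance condition, for any two coroots α and β one has the symmetry relation ⟨α̌,β⟩·Q(α) = ⟨β̌,α⟩·Q(β) in A, and consequently n_α divides n_β·⟨α̌,β⟩. In particular the 'sharp Cartan integers' ⟨α̌^♯, β^♯⟩ := (n_β/n_α)·⟨α̌,β⟩ are integers, where α^♯ = n_α·α and α̌^♯ = α̌/n_α. -/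
/-- Under strict invariance, for any two coroots `α` and `β` one has the
symmetry relation `⟨α̌,β⟩ • Q(α) = ⟨β̌,α⟩ • Q(β)` in `A`, and consequently `n_α` divides
`n_β • ⟨α̌,β⟩`, so the "sharp Cartan integers" `(n_β / n_α) • ⟨α̌,β⟩` are integers (where
`n_α = ord(Q α)`). -/
theorem stmt4 {Λ A : Type*} [AddCommGroup Λ] [AddCommGroup A] [Finite A]
    [Module.Free ℤ Λ] [Module.Finite ℤ Λ]
    (Q : Λ → A)
    (hQ : ∀ (n : ℤ) (l : Λ), Q (n • l) = n ^ 2 • Q l)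
    (b : Λ → Λ → A)
    (hb : ∀ l m : Λ, b l m = Q (l + m) - Q l - Q m)
    (hbadd : ∀ l₁ l₂ m : Λ, b (l₁ + l₂) m = b l₁ m + b l₂ m)
    (hbadd' : ∀ l m₁ m₂ : Λ, b l (m₁ + m₂) = b l m₁ + b l m₂)
    (Φ : Set Λ) (d : Λ → Λ →+ ℤ)
    (hpair : ∀ α ∈ Φ, d α α = 2)
    (hstrict : ∀ α ∈ Φ, ∀ l : Λ, b α l = d α l • Q α) :
    ∀ α ∈ Φ, ∀ β ∈ Φ,
      d α β • Q α = d β α • Q β ∧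
      (addOrderOf (Q α) : ℤ) ∣ (addOrderOf (Q β) : ℤ) * d α β := by
  intro α hα β hβ
  have hsym : d α β • Q α = d β α • Q β := by
    rw [← hstrict α hα β, ← hstrict β hβ α, hb, hb, add_comm, sub_right_comm]
  refine ⟨hsym, ?_⟩
  rw [addOrderOf_dvd_iff_zsmul_eq_zero, mul_smul, hsym, smul_comm,
    natCast_zsmul, addOrderOf_nsmul_eq_zero, smul_zero]
end

section
/- Under strict invariance, for every coroot α and every λ ∈ Λ^♯, the reflection formula restricts to the sharp root datum: s_α(λ) = λ − ⟨α̌^♯,λ⟩·α^♯, where α^♯ = n_α·α and α̌^♯ = α̌/n_α (which takes integer values on Λ^♯). Moreover ⟨α̌^♯, α^♯⟩ = 2. In particular the reflection of Λ^♯ in the 'sharp' root α^♯ coincides with the restriction of s_α to Λ^♯. -/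
/-- Under strict invariance, for every coroot `α` and every `λ ∈ Λ^♯`, the
reflection formula restricts to the sharp root datum: `s_α(λ) = λ − ⟨α̌^♯,λ⟩ • α^♯`, where
`α^♯ = n_α • α` and `⟨α̌^♯,λ⟩ = ⟨α̌,λ⟩ / n_α` is an integer.  Moreover
`⟨α̌^♯, α^♯⟩ = 2` (equivalently `⟨α̌, n_α • α⟩ = 2 n_α`). -/
theorem stmt9 {Λ A : Type*} [AddCommGroup Λ] [AddCommGroup A] [Finite A]
    [Module.Free ℤ Λ] [Module.Finite ℤ Λ]
    (Q : Λ → A)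
    (hQ : ∀ (n : ℤ) (l : Λ), Q (n • l) = n ^ 2 • Q l)
    (b : Λ → Λ → A)
    (hb : ∀ l m : Λ, b l m = Q (l + m) - Q l - Q m)
    (hbadd : ∀ l₁ l₂ m : Λ, b (l₁ + l₂) m = b l₁ m + b l₂ m)
    (hbadd' : ∀ l m₁ m₂ : Λ, b l (m₁ + m₂) = b l m₁ + b l m₂)
    (Φ : Set Λ) (d : Λ → Λ →+ ℤ)
    (hpair : ∀ α ∈ Φ, d α α = 2)
    (hstrict : ∀ α ∈ Φ, ∀ l : Λ, b α l = d α l • Q α) :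
    ∀ α ∈ Φ,
      (∀ l : Λ, (∀ μ : Λ, b l μ = 0) →
        ∃ k : ℤ, d α l = (addOrderOf (Q α) : ℤ) * k ∧
          l - d α l • α = l - k • ((addOrderOf (Q α) : ℤ) • α)) ∧
      d α ((addOrderOf (Q α) : ℤ) • α) = 2 * (addOrderOf (Q α) : ℤ) := by
  intro α hα
  constructor
  · intro l hl
    have hsym : b α l = b l α := by rw [hb, hb, add_comm]; abel
    have h0 : (d α l) • Q α = 0 := by rw [← hstrict α hα l, hsym, hl]
    have hdvd : ((addOrderOf (Q α) : ℤ)) ∣ d α l :=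
      addOrderOf_dvd_iff_zsmul_eq_zero.mpr h0
    obtain ⟨k, hk⟩ := hdvd
    exact ⟨k, hk, by rw [hk, smul_smul, mul_comm]⟩
  · rw [map_zsmul, hpair α hα, mul_comm, smul_eq_mul]
end

section
/- Let Λ be a lattice with a finite reduced crystallographic root datum (Φ, α ↦ α̌) and let Q be an A-valued Weyl-invariant quadratic form with bilinear form b satisfying strict invariance b(α,λ) = ⟨α̌,λ⟩·Q(α). Then the data Λ^♯ (kernel of b), Φ^♯ := {n_α α : α ∈ Φ} ⊆ Λ^♯, and the duals (α^♯)̌ := α̌/n_α ∈ Hom(Λ^♯,ℤ) form a root datum: ⟨α̌^♯, α^♯⟩ = 2, the reflections λ ↦ λ − ⟨α̌^♯,λ⟩α^♯ preserve Λ^♯ and permute Φ^♯, and the dual reflections permute {α̌^♯}. -/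
/-- Let `Λ` be a lattice with a finite reduced crystallographic root datum
`(Φ, α ↦ α̌)` and let `Q` be an `A`-valued Weyl-invariant quadratic form with bilinear form
`b` satisfying strict invariance `b(α,λ) = ⟨α̌,λ⟩ • Q(α)`.  Then the data `Λ^♯ = ker b`,
`Φ^♯ = {n_α • α : α ∈ Φ} ⊆ Λ^♯`, and duals `α̌^♯ = α̌ / n_α` form a root datum:
`⟨α̌^♯, α^♯⟩ = 2`, the sharp reflections preserve `Λ^♯` (with integral pairings) and permute
`Φ^♯`, and the dual reflections permute the `α̌^♯`. -/
theorem stmt10 {Λ A : Type*} [AddCommGroup Λ] [AddCommGroup A] [Finite A]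
    [Module.Free ℤ Λ] [Module.Finite ℤ Λ]
    (Q : Λ → A)
    (hQ : ∀ (n : ℤ) (l : Λ), Q (n • l) = n ^ 2 • Q l)
    (b : Λ → Λ → A)
    (hb : ∀ l m : Λ, b l m = Q (l + m) - Q l - Q m)
    (hbadd : ∀ l₁ l₂ m : Λ, b (l₁ + l₂) m = b l₁ m + b l₂ m)
    (hbadd' : ∀ l m₁ m₂ : Λ, b l (m₁ + m₂) = b l m₁ + b l m₂)
    (Φ : Set Λ) (hΦfin : Φ.Finite) (d : Λ → Λ →+ ℤ)
    (hinj : Set.InjOn d Φ)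
    (hpair : ∀ α ∈ Φ, d α α = 2)
    (hstab : ∀ α ∈ Φ, ∀ β ∈ Φ, α - d β α • β ∈ Φ)
    (hdualrefl : ∀ α ∈ Φ, ∀ β ∈ Φ, d (α - d β α • β) = d α - d α β • d β)
    (hQW : ∀ α ∈ Φ, ∀ l : Λ, Q (l - d α l • α) = Q l)
    (hstrict : ∀ α ∈ Φ, ∀ l : Λ, b α l = d α l • Q α) :
    -- Φ^♯ is contained in Λ^♯
    (∀ α ∈ Φ, ∀ m : Λ, b ((addOrderOf (Q α) : ℤ) • α) m = 0) ∧
    -- ⟨α̌^♯, α^♯⟩ = 2, i.e. ⟨α̌, n_α • α⟩ = 2 n_α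
    (∀ α ∈ Φ, d α ((addOrderOf (Q α) : ℤ) • α) = 2 * (addOrderOf (Q α) : ℤ)) ∧
    -- the sharp reflections have integral pairings on Λ^♯ and preserve Λ^♯
    (∀ α ∈ Φ, ∀ l : Λ, (∀ μ : Λ, b l μ = 0) →
       (addOrderOf (Q α) : ℤ) ∣ d α l ∧ ∀ μ : Λ, b (l - d α l • α) μ = 0) ∧
    -- the sharp reflections permute Φ^♯
    (∀ α ∈ Φ, ∀ β ∈ Φ,
       (addOrderOf (Q α) : ℤ) ∣ d α ((addOrderOf (Q β) : ℤ) • β) ∧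
       ∃ γ ∈ Φ, ((addOrderOf (Q β) : ℤ) • β) - d α ((addOrderOf (Q β) : ℤ) • β) • α =
         (addOrderOf (Q γ) : ℤ) • γ) ∧
    -- the dual reflections permute the duals α̌^♯
    (∀ α ∈ Φ, ∀ β ∈ Φ, ∃ γ ∈ Φ,
       addOrderOf (Q γ) = addOrderOf (Q β) ∧ d γ = d β - d β α • d α) := by

  -- b is ℤ-linear in the first argument
  have hzero : ∀ m : Λ, b 0 m = 0 := by
    intro m
    have := hbadd 0 0 m
    simpa using this.symm
  have hzsmul : ∀ (k : ℤ) (l m : Λ), b (k • l) m = k • b l m := by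
    intro k l m
    exact map_zsmul (AddMonoidHom.mk' (fun l => b l m) (fun a c => hbadd a c m)) k l
  -- b is symmetric
  have hsymm : ∀ l m : Λ, b l m = b m l := by
    intro l m
    rw [hb, hb, add_comm]
    abel
  -- part 1
  have h1 : ∀ α ∈ Φ, ∀ m : Λ, b ((addOrderOf (Q α) : ℤ) • α) m = 0 := by
    intro α hα m
    rw [hzsmul, hstrict α hα m, smul_comm]
    rw [show ((addOrderOf (Q α) : ℤ)) • Q α = 0 from
      addOrderOf_dvd_iff_zsmul_eq_zero.mp dvd_rfl, smul_zero]
  have h2 : ∀ α ∈ Φ, d α ((addOrderOf (Q α) : ℤ) • α) = 2 * (addOrderOf (Q α) : ℤ) := by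
    intro α hα
    rw [map_zsmul, hpair α hα, smul_eq_mul, mul_comm]
  have h3 : ∀ α ∈ Φ, ∀ l : Λ, (∀ μ : Λ, b l μ = 0) →
      (addOrderOf (Q α) : ℤ) ∣ d α l ∧ ∀ μ : Λ, b (l - d α l • α) μ = 0 := by
    intro α hα l hl
    have hdvd : (addOrderOf (Q α) : ℤ) ∣ d α l := by
      rw [addOrderOf_dvd_iff_zsmul_eq_zero]
      rw [← hstrict α hα l, hsymm, hl]
    refine ⟨hdvd, fun μ => ?_⟩
    rw [sub_eq_add_neg, ← neg_smul, hbadd, hl, hzsmul, hstrict α hα μ, smul_comm, neg_smul,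
      addOrderOf_dvd_iff_zsmul_eq_zero.mp hdvd, neg_zero, smul_zero, zero_add]
  refine ⟨h1, h2, h3, ?_, ?_⟩
  · intro α hα β hβ
    have hdvd : (addOrderOf (Q α) : ℤ) ∣ d α ((addOrderOf (Q β) : ℤ) • β) := by
      rw [addOrderOf_dvd_iff_zsmul_eq_zero, ← hstrict α hα]
      rw [hsymm, hzsmul, hstrict β hβ α, smul_comm,
        show ((addOrderOf (Q β) : ℤ)) • Q β = 0 from
          addOrderOf_dvd_iff_zsmul_eq_zero.mp dvd_rfl, smul_zero]
    refine ⟨hdvd, β - d α β • α, hstab β hβ α hα, ?_⟩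
    have hQγ : Q (β - d α β • α) = Q β := hQW α hα β
    rw [hQγ, map_zsmul, smul_sub, smul_comm, smul_eq_mul, mul_comm, mul_smul]
  · intro α hα β hβ
    refine ⟨β - d α β • α, hstab β hβ α hα, by rw [hQW α hα β], hdualrefl β hβ α hα⟩
end

section
/- Let C be a symmetric monoidal category in which every object is invertible (a Picard groupoid). For an object x, let ε(x) ∈ Aut(𝟙) denote the automorphism of the unit obtained by transporting the symmetry isomorphism β_{x,x} : x ⊗ x → x ⊗ x along an inverse of x ⊗ x. Then ε(x) is independent of choices, ε(x ⊗ y) = ε(x) ∘ ε(y) for all x, y, and ε(x) ∘ ε(x) = id. In other words, ε defines a group homomorphism from the group of isomorphism classes of objects of C to the 2-torsion subgroup of Aut(𝟙). -/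
open CategoryTheory MonoidalCategory BraidedCategory

namespace Stmt16Aux

variable {C : Type*} [Groupoid C] [MonoidalCategory C] [SymmetricCategory C]

/-- Scalar action of `End (𝟙_ C)` on an object. -/
def sc (s : 𝟙_ C ⟶ 𝟙_ C) (a : C) : a ⟶ a := (λ_ a).inv ≫ s ▷ a ≫ (λ_ a).hom

lemma sc_natural (s : 𝟙_ C ⟶ 𝟙_ C) {a b : C} (f : a ⟶ b) :
    f ≫ sc s b = sc s a ≫ f := by
  simp only [sc, Category.assoc]
  rw [← leftUnitor_naturality, ← whisker_exchange_assoc, ← leftUnitor_inv_naturality_assoc]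

lemma sc_comp (s t : 𝟙_ C ⟶ 𝟙_ C) (a : C) : sc s a ≫ sc t a = sc (s ≫ t) a := by
  simp [sc]

lemma sc_rho (s : 𝟙_ C ⟶ 𝟙_ C) (a : C) :
    sc s a = (ρ_ a).inv ≫ a ◁ s ≫ (ρ_ a).hom := by
  have h := braiding_naturality s (𝟙 a)
  simp only [tensorHom_id, id_tensorHom, braiding_tensorUnit_left] at h
  simp only [sc]
  rw [show s ▷ a = ((λ_ a).hom ≫ (ρ_ a).inv) ≫ (a ◁ s) ≫ ((ρ_ a).hom ≫ (λ_ a).inv) from by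
    rw [← Category.assoc, ← h]; simp]
  simp

lemma sc_whiskerRight (s : 𝟙_ C ⟶ 𝟙_ C) (a b : C) : (sc s a) ▷ b = sc s (a ⊗ b) := by
  simp only [sc, leftUnitor_tensor_hom, leftUnitor_tensor_inv, comp_whiskerRight, Category.assoc]
  rw [whiskerRight_tensor]
  simp

lemma sc_whiskerLeft (s : 𝟙_ C ⟶ 𝟙_ C) (a b : C) : b ◁ (sc s a) = sc s (b ⊗ a) := by
  rw [sc_rho, sc_rho]
  simp only [rightUnitor_tensor_hom, rightUnitor_tensor_inv, MonoidalCategory.whiskerLeft_comp,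
    Category.assoc, tensor_whiskerLeft]
  simp


open MonoidalCategory in
lemma braiding_tensor_tensor (X Y Z W : C) :
    (β_ (X ⊗ Y) (Z ⊗ W)).hom =
      tensorμ X Y Z W ≫ ((β_ X Z).hom ⊗ₘ (β_ Y W).hom) ≫ tensorδ Z W X Y := by
  rw [MonoidalCategory.tensorHom_def]
  dsimp only [tensorμ, tensorδ]
  rw [← SymmetricCategory.braiding_swap_eq_inv_braiding]
  calc
    (β_ (X ⊗ Y) (Z ⊗ W)).hom
        = 𝟙 _ ⊗≫ X ◁ (β_ Y Z).hom ▷ W ⊗≫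
          ((X ⊗ Z) ◁ (β_ Y W).hom ≫ (β_ X Z).hom ▷ (W ⊗ Y)) ⊗≫
          Z ◁ (β_ X W).hom ▷ Y ⊗≫ 𝟙 _ := by
      rw [braiding_tensor_left_hom]
      simp only [braiding_tensor_right_hom]
      monoidal
    _ = 𝟙 _ ⊗≫ X ◁ (β_ Y Z).hom ▷ W ⊗≫
          ((β_ X Z).hom ▷ (Y ⊗ W) ≫ (Z ⊗ X) ◁ (β_ Y W).hom) ⊗≫
          Z ◁ (β_ X W).hom ▷ Y ⊗≫ 𝟙 _ := by
      rw [whisker_exchange]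
    _ = _ := by
      monoidal


/-- Tensoring on the right with an invertible object is an equivalence. -/
noncomputable def tensorRightEquiv (a b : C) (e : a ⊗ b ≅ 𝟙_ C) : C ≌ C :=
  CategoryTheory.Equivalence.mk (tensorRight a) (tensorRight b)
    (NatIso.ofComponents (fun z =>
      (ρ_ z).symm ≪≫ whiskerLeftIso z e.symm ≪≫ (α_ z a b).symm)
      (by
        intro z z' f
        dsimp
        rw [rightUnitor_inv_naturality_assoc, whiskerLeftIso_hom, ← whisker_exchange_assoc]
        simp))
    (NatIso.ofComponents (fun z =>
      (α_ z b a) ≪≫ whiskerLeftIso z ((β_ b a) ≪≫ e) ≪≫ ρ_ z)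
      (by
        intro z z' f
        dsimp
        rw [associator_naturality_left_assoc, whiskerLeftIso_hom, ← whisker_exchange_assoc]
        simp [rightUnitor_naturality]))

lemma existsUnique_sc (a b : C) (e : a ⊗ b ≅ 𝟙_ C) (g : a ⟶ a) :
    ∃! s : 𝟙_ C ⟶ 𝟙_ C, g = sc s a := by
  letI E := tensorRightEquiv a b e
  haveI : (tensorRight a).Full := E.full_functor
  haveI : (tensorRight a).Faithful := E.faithful_functor
  obtain ⟨s, hs⟩ := (tensorRight a).map_surjective ((λ_ a).hom ≫ g ≫ (λ_ a).inv)
  refine ⟨s, ?_, ?_⟩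
  · dsimp at hs
    simp [sc, hs]
  · intro t ht
    apply (tensorRight a).map_injective
    dsimp
    dsimp at hs
    have h2 : t ▷ a = (λ_ a).hom ≫ sc t a ≫ (λ_ a).inv := by simp [sc]
    rw [h2, hs, ← ht]


lemma sc_unit (s : 𝟙_ C ⟶ 𝟙_ C) : sc s (𝟙_ C) = s := by
  simp [sc, MonoidalCategory.whiskerRight_id, unitors_equal, unitors_inv_equal]

lemma end_comm (s t : 𝟙_ C ⟶ 𝟙_ C) : s ≫ t = t ≫ s := by
  have h := sc_natural s (a := 𝟙_ C) (b := 𝟙_ C) t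
  rw [sc_unit] at h
  exact h.symm

open MonoidalCategory in
lemma mult (x y : C) (s t : 𝟙_ C ⟶ 𝟙_ C)
    (hx : (β_ x x).hom = sc s (x ⊗ x)) (hy : (β_ y y).hom = sc t (y ⊗ y)) :
    (β_ (x ⊗ y) (x ⊗ y)).hom = sc (s ≫ t) ((x ⊗ y) ⊗ (x ⊗ y)) := by
  rw [braiding_tensor_tensor, hx, hy, MonoidalCategory.tensorHom_def, sc_whiskerRight, sc_whiskerLeft,
    sc_comp, ← Category.assoc, sc_natural, Category.assoc, tensorμ_tensorδ, Category.comp_id]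

end Stmt16Aux


open Stmt16Aux in
/-- Let `C` be a symmetric monoidal category in which every object is
invertible (a Picard groupoid).  For an object `x`, let `ε(x) ∈ Aut(𝟙)` be the automorphism
of the unit obtained by transporting the symmetry `β_{x,x} : x ⊗ x ≅ x ⊗ x` along an inverse
of `x ⊗ x`; equivalently, `ε(x)` is the unique automorphism of `𝟙` whose left-tensor action
on `x ⊗ x` equals `β_{x,x}`.  Then `ε(x)` is independent of choices (uniqueness),
`ε(x ⊗ y) = ε(x) ∘ ε(y)`, and `ε(x) ∘ ε(x) = id`; i.e. `ε` is a homomorphism from the group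
of isomorphism classes of objects of `C` to the `2`-torsion of `Aut(𝟙)`. -/
theorem stmt16 {C : Type*} [Groupoid C] [MonoidalCategory C] [SymmetricCategory C]
    (hinv : ∀ x : C, ∃ y : C, Nonempty ((x ⊗ y) ≅ 𝟙_ C)) :
    ∃ ε : C → Aut (𝟙_ C),
      (∀ x : C, (β_ x x).hom =
        (λ_ (x ⊗ x)).inv ≫ ((ε x).hom ▷ (x ⊗ x)) ≫ (λ_ (x ⊗ x)).hom) ∧
      (∀ (x : C) (θ : Aut (𝟙_ C)),
        (β_ x x).hom =
          (λ_ (x ⊗ x)).inv ≫ (θ.hom ▷ (x ⊗ x)) ≫ (λ_ (x ⊗ x)).hom → θ = ε x) ∧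
      (∀ x y : C, ε (x ⊗ y) = ε x * ε y) ∧
      (∀ x : C, ε x * ε x = 1) := by
  choose i hi using hinv
  -- for each object `a`, uniqueness/existence of scalars
  have U : ∀ (a : C) (g : a ⟶ a), ∃! s : 𝟙_ C ⟶ 𝟙_ C, g = sc s a :=
    fun a g => existsUnique_sc a (i a) (hi a).some g
  have inj : ∀ (a : C) (s t : 𝟙_ C ⟶ 𝟙_ C), sc s a = sc t a → s = t := by
    intro a s t h
    exact ((U a (sc s a)).unique rfl h)
  set S : C → (𝟙_ C ⟶ 𝟙_ C) := fun x => (U (x ⊗ x) (β_ x x).hom).choose with hS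
  have hSpec : ∀ x : C, (β_ x x).hom = sc (S x) (x ⊗ x) :=
    fun x => (U (x ⊗ x) (β_ x x).hom).choose_spec.1
  refine ⟨fun x => asIso (S x), ?_, ?_, ?_, ?_⟩
  · intro x
    simpa [sc] using hSpec x
  · intro x θ hθ
    apply Iso.ext
    simp only [asIso_hom]
    exact (U (x ⊗ x) (β_ x x).hom).choose_spec.2 θ.hom (by simpa [sc] using hθ)
  · intro x y
    apply Iso.ext
    have h := mult x y (S x) (S y) (hSpec x) (hSpec y)
    have : S (x ⊗ y) = S x ≫ S y :=
      inj _ _ _ (by rw [← h, hSpec (x ⊗ y)])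
    simp only [Aut.Aut_mul_def, Iso.trans_hom, asIso_hom]
    rw [this, end_comm]
    rfl
  · intro x
    apply Iso.ext
    have h2 : sc (S x ≫ S x) (x ⊗ x) = sc (𝟙 _) (x ⊗ x) := by
      rw [← sc_comp, ← hSpec x]
      simp [sc]
    have : S x ≫ S x = 𝟙 _ := inj _ _ _ h2
    simp only [Aut.Aut_mul_def, Iso.trans_hom, asIso_hom, this]
    exact this
end
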